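/- Let ν ≥ 2 and let Ψ_NN be the set of all nearest-neighbour coverings of Γ_{2ν}, i.e., coverings ψ with ψ(2t−1) ∈ {2(t−1), 2t, 2(t+1)} ∩ B for every 1 ≤ t ≤ ν. Then the RVB polynomial F_{Ψ_NN} = Σ_{ψ∈Ψ_NN} F_ψ splits across no nontrivial bipartition of Γ_{2ν}; i.e., the nearest-neighbour RVB state on the ladder is genuinely multipartite entangled. (In particular, there is no nonempty proper E ⊆ Γ_{2ν} with ψ(E∩A) = E∩B for all ψ ∈ Ψ_NN.) -/

import Mathlib

open MvPolynomial Finset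

noncomputable section

/-- The odd-labelled site `2t−1` of the paper (`t`-th site of sublattice `A`),
zero-indexed as `2t` in `Fin (2ν)`. -/
def siteA (ν : ℕ) (t : Fin ν) : Fin (2 * ν) := ⟨2 * t.val, by have := t.isLt; omega⟩

/-- The even-labelled site `2t` of the paper (`t`-th site of sublattice `B`),
zero-indexed as `2t+1` in `Fin (2ν)`. -/
def siteB (ν : ℕ) (t : Fin ν) : Fin (2 * ν) := ⟨2 * t.val + 1, by have := t.isLt; omega⟩

/-- A covering is a bijection `ψ : A → B`; it is encoded by the permutation
`σ` of `Fin ν` with `ψ(siteA t) = siteB (σ t)`.  Its covering polynomial is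
`F_ψ = ∏_{a∈A} (X_{ψ(a)} − X_a)`. -/
def covPoly (ν : ℕ) (σ : Equiv.Perm (Fin ν)) : MvPolynomial (Fin (2 * ν)) ℂ :=
  ∏ t : Fin ν, (X (siteB ν (σ t)) - X (siteA ν t))

/-- `F` splits across the bipartition `(E, Eᶜ)`. -/
def SplitsAcross {n : ℕ} (F : MvPolynomial (Fin n) ℂ) (E : Finset (Fin n)) : Prop :=
  ∃ p q : MvPolynomial (Fin n) ℂ, F = p * q ∧ p.vars ⊆ E ∧ q.vars ⊆ Eᶜ

/-- `ψ(E ∩ A) = E ∩ B` for the covering `ψ` encoded by `σ`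
(here `E ∩ B` is the set of odd-indexed, i.e. `B`-sublattice, elements of `E`). -/
def MapsCut (ν : ℕ) (σ : Equiv.Perm (Fin ν)) (E : Finset (Fin (2 * ν))) : Prop :=
  ((Finset.univ.filter (fun t => siteA ν t ∈ E)).image fun t => siteB ν (σ t))
    = E.filter (fun x => x.val % 2 = 1)


/-- The (unnormalized) RVB polynomial `F_Ψ = Σ_{ψ∈Ψ} F_ψ`. -/
def rvbPoly (ν : ℕ) (Ψ : Finset (Equiv.Perm (Fin ν))) : MvPolynomial (Fin (2 * ν)) ℂ :=
  ∑ σ ∈ Ψ, covPoly ν σ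

/-- The set of nearest-neighbour coverings: those whose induced permutation `σ`
of `{1,…,ν}` satisfies `|σ(t) − t| ≤ 1` for all `t`. -/
def nnCoverings (ν : ℕ) : Finset (Equiv.Perm (Fin ν)) :=
  Finset.univ.filter (fun σ => ∀ t : Fin ν, (((σ t).val : ℤ) - (t.val : ℤ)).natAbs ≤ 1)

-- ### basic NN facts

lemma mem_nn {ν : ℕ} {σ : Equiv.Perm (Fin ν)} :
    σ ∈ nnCoverings ν ↔ ∀ t : Fin ν, (((σ t).val : ℤ) - (t.val : ℤ)).natAbs ≤ 1 := by
  simp [nnCoverings]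

lemma nn_bound {ν : ℕ} {σ : Equiv.Perm (Fin ν)} (h : σ ∈ nnCoverings ν) (t : Fin ν) :
    (σ t).val ≤ t.val + 1 ∧ t.val ≤ (σ t).val + 1 := by
  have := mem_nn.mp h t
  omega

lemma nn_inv {ν : ℕ} {σ : Equiv.Perm (Fin ν)} (h : σ ∈ nnCoverings ν) :
    σ⁻¹ ∈ nnCoverings ν := by
  rw [mem_nn]
  intro t
  have h2 := mem_nn.mp h (σ⁻¹ t)
  rw [show σ (σ⁻¹ t) = t from σ.apply_symm_apply t] at h2
  omega

lemma one_mem_nn {ν : ℕ} : (1 : Equiv.Perm (Fin ν)) ∈ nnCoverings ν := by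
  rw [mem_nn]; intro t; simp

-- σ b = a, b = a + 1  →  σ a = b
lemma nn_pair {ν : ℕ} {σ : Equiv.Perm (Fin ν)} (hσ : σ ∈ nnCoverings ν) :
    ∀ n (a b : Fin ν), a.val = n → b.val = a.val + 1 → σ b = a → σ a = b := by
  intro n
  induction n using Nat.strong_induction_on with
  | _ n ih =>
    intro a b han hba hsb
    have h1 := nn_bound hσ a
    have hne : σ a ≠ a := by
      intro h
      have : σ b = σ a := by rw [h, hsb]
      have := σ.injective this
      exact absurd (congrArg Fin.val this) (by omega)
    rcases Nat.lt_or_ge (σ a).val a.val with hlt | hge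
    · -- σ a = a - 1
      exfalso
      set c := σ a with hc
      have hca : a.val = c.val + 1 := by omega
      have : σ c = a := ih c.val (by omega) c a rfl hca hc.symm
      have : σ c = σ b := by rw [this, hsb]
      have := σ.injective this
      have := congrArg Fin.val this
      omega
    · have : (σ a).val = b.val := by
        have : (σ a).val ≠ a.val := fun h => hne (Fin.ext h)
        omega
      exact Fin.ext this

lemma nn_pair_up {ν : ℕ} {σ : Equiv.Perm (Fin ν)} (hσ : σ ∈ nnCoverings ν)
    {a b : Fin ν} (hba : b.val = a.val + 1) (hab : σ a = b) : σ b = a := by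
  have h1 : σ⁻¹ b = a := by rw [← hab]; simp
  have h2 : σ⁻¹ a = b := nn_pair (nn_inv hσ) a.val a b rfl hba h1
  have : σ (σ⁻¹ a) = σ b := congrArg σ h2
  simpa using this.symm

lemma nn_pair_down {ν : ℕ} {σ : Equiv.Perm (Fin ν)} (hσ : σ ∈ nnCoverings ν)
    {a b : Fin ν} (hba : a.val = b.val + 1) (hab : σ a = b) : σ b = a :=
  nn_pair hσ b.val b a rfl hba hab

/-- every moved point lies in an adjacent transposition pair -/
lemma nn_cases {ν : ℕ} {σ : Equiv.Perm (Fin ν)} (hσ : σ ∈ nnCoverings ν) (t : Fin ν)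
    (hmoved : σ t ≠ t) :
    ∃ r : Fin ν, ∃ h : r.val + 1 < ν,
      σ r = ⟨r.val + 1, h⟩ ∧ σ ⟨r.val + 1, h⟩ = r ∧ (t = r ∨ t.val = r.val + 1) := by
  have h1 := nn_bound hσ t
  have hne : (σ t).val ≠ t.val := fun h => hmoved (Fin.ext h)
  rcases Nat.lt_or_ge (σ t).val t.val with hlt | hge
  · have hval : t.val = (σ t).val + 1 := by omega
    have hpd : σ (σ t) = t := nn_pair_down hσ hval rfl
    have hlt2 : (σ t).val + 1 < ν := by have := t.isLt; omega
    have ht : (⟨(σ t).val + 1, hlt2⟩ : Fin ν) = t := Fin.ext hval.symm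
    exact ⟨σ t, hlt2, by rw [ht]; exact hpd, by rw [ht], Or.inr hval⟩
  · have hI := (σ t).isLt
    have hv : (σ t).val = t.val + 1 := by omega
    have hh : t.val + 1 < ν := by omega
    have hmk : (⟨t.val + 1, hh⟩ : Fin ν) = σ t := (Fin.ext hv).symm
    refine ⟨t, hh, Fin.ext hv, ?_, Or.inl rfl⟩
    rw [hmk]
    exact nn_pair_up hσ hv rfl

lemma swap_mem_nn {ν : ℕ} (r : Fin ν) (h : r.val + 1 < ν) :
    Equiv.swap r ⟨r.val + 1, h⟩ ∈ nnCoverings ν := by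
  rw [mem_nn]
  intro t
  rcases eq_or_ne t r with rfl | htr
  · rw [Equiv.swap_apply_left]; simp
  rcases eq_or_ne t ⟨r.val + 1, h⟩ with rfl | htr1
  · rw [Equiv.swap_apply_right]; simp
  · rw [Equiv.swap_apply_of_ne_of_ne htr htr1]; simp

lemma nn_one_or_swap {ν : ℕ} {σ : Equiv.Perm (Fin ν)} (hσ : σ ∈ nnCoverings ν)
    (huniq : ∀ (r r' : Fin ν) (h : r.val + 1 < ν) (h' : r'.val + 1 < ν),
      σ r = ⟨r.val + 1, h⟩ → σ r' = ⟨r'.val + 1, h'⟩ → r = r') :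
    σ = 1 ∨ ∃ (r : Fin ν) (h : r.val + 1 < ν),
      σ r = ⟨r.val + 1, h⟩ ∧ σ = Equiv.swap r ⟨r.val + 1, h⟩ := by
  by_cases h1 : σ = 1
  · exact Or.inl h1
  right
  have : ∃ t, σ t ≠ t := by
    by_contra hall
    push_neg at hall
    exact h1 (Equiv.ext fun t => hall t)
  obtain ⟨t, ht⟩ := this
  obtain ⟨r, h, hr1, hr2, _⟩ := nn_cases hσ t ht
  refine ⟨r, h, hr1, ?_⟩
  apply Equiv.ext
  intro t'
  rcases eq_or_ne t' r with rfl | hne1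
  · rw [hr1, Equiv.swap_apply_left]
  rcases eq_or_ne t' ⟨r.val + 1, h⟩ with rfl | hne2
  · rw [hr2, Equiv.swap_apply_right]
  rw [Equiv.swap_apply_of_ne_of_ne hne1 hne2]
  by_contra hmoved
  obtain ⟨r', h', hr1', hr2', hor⟩ := nn_cases hσ t' hmoved
  have hrr : r' = r := huniq r' r h' h hr1' hr1
  subst hrr
  rcases hor with rfl | hval
  · exact hne1 rfl
  · exact hne2 (Fin.ext hval)

lemma eval_rvb {ν : ℕ} (Ψ : Finset (Equiv.Perm (Fin ν))) (x : Fin (2 * ν) → ℂ) :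
    eval x (rvbPoly ν Ψ) =
      ∑ σ ∈ Ψ, ∏ t : Fin ν, (x (siteB ν (σ t)) - x (siteA ν t)) := by
  simp [rvbPoly, covPoly]

def Xf (ν : ℕ) (k : ℕ) (s u : ℂ) : Fin (2 * ν) → ℂ :=
  fun i => if i.val = k then s else if i.val = k + 1 then u else (((i.val + 1) / 2 : ℕ) : ℂ)

lemma prod_T_pair {ν : ℕ} (f : Fin ν → ℂ) (a b : Fin ν) (hab : a ≠ b)
    (hoff : ∀ t, t ≠ a → t ≠ b → f t = 1) :
    ∏ t : Fin ν, f t = f a * f b := by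
  rw [← Finset.prod_subset (Finset.subset_univ {a, b})
    (fun t _ ht => hoff t (fun h => ht (by simp [h])) (fun h => ht (by simp [h])))]
  exact Finset.prod_pair hab

lemma prod_T_single {ν : ℕ} (f : Fin ν → ℂ) (a : Fin ν)
    (hoff : ∀ t, t ≠ a → f t = 1) :
    ∏ t : Fin ν, f t = f a := by
  rw [← Finset.prod_subset (Finset.subset_univ {a})
    (fun t _ ht => hoff t (fun h => ht (by simp [h])))]
  simp

lemma evalB {ν : ℕ} (t0 : ℕ) (ht : t0 + 1 < ν) (s u : ℂ) :
    eval (Xf ν (2 * t0 + 1) s u) (rvbPoly ν (nnCoverings ν)) =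
      (s - (t0 : ℂ)) * ((t0 : ℂ) + 2 - u) + 2 * (s - u) := by
  set x := Xf ν (2 * t0 + 1) s u with hx
  set t₀ : Fin ν := ⟨t0, by omega⟩ with ht₀
  set t₁ : Fin ν := ⟨t0 + 1, ht⟩ with ht₁
  have ht01 : t₀ ≠ t₁ := by
    intro h; have := congrArg Fin.val h; simp [ht₀, ht₁] at this
  set τ : Equiv.Perm (Fin ν) := Equiv.swap t₀ t₁ with hτ
  -- value lemmas
  have hxA : ∀ t : Fin ν, t ≠ t₁ → x (siteA ν t) = (t.val : ℂ) := by
    intro t htne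
    have hv : t.val ≠ t0 + 1 := fun h => htne (Fin.ext h)
    show (if 2 * t.val = 2 * t0 + 1 then s else if 2 * t.val = 2 * t0 + 1 + 1 then u
      else (((2 * t.val + 1) / 2 : ℕ) : ℂ)) = _
    rw [if_neg (by omega), if_neg (by omega), show (2 * t.val + 1) / 2 = t.val by omega]
  have hxA1 : x (siteA ν t₁) = u := by
    show (if 2 * (t0 + 1) = 2 * t0 + 1 then s else if 2 * (t0 + 1) = 2 * t0 + 1 + 1 then u
      else _) = _
    rw [if_neg (by omega), if_pos (by omega)]
  have hxB : ∀ t : Fin ν, t ≠ t₀ → x (siteB ν t) = (t.val : ℂ) + 1 := by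
    intro t htne
    have hv : t.val ≠ t0 := fun h => htne (Fin.ext h)
    show (if 2 * t.val + 1 = 2 * t0 + 1 then s else if 2 * t.val + 1 = 2 * t0 + 1 + 1 then u
      else (((2 * t.val + 1 + 1) / 2 : ℕ) : ℂ)) = _
    rw [if_neg (by omega), if_neg (by omega), show (2 * t.val + 1 + 1) / 2 = t.val + 1 by omega]
    push_cast; ring
  have hxB0 : x (siteB ν t₀) = s := by
    show (if 2 * t0 + 1 = 2 * t0 + 1 then s else _) = _
    rw [if_pos rfl]
  have hv0 : (t₀.val : ℂ) = (t0 : ℂ) := by simp [ht₀]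
  have hv1 : (t₁.val : ℂ) = (t0 : ℂ) + 1 := by rw [ht₁]; push_cast; ring
  -- terms
  have hT1 : ∏ t : Fin ν, (x (siteB ν ((1 : Equiv.Perm (Fin ν)) t)) - x (siteA ν t))
      = (s - (t0 : ℂ)) * ((t0 : ℂ) + 2 - u) := by
    rw [prod_T_pair (fun t => x (siteB ν ((1 : Equiv.Perm (Fin ν)) t)) - x (siteA ν t))
      t₀ t₁ ht01 (fun t h0 h1 => by
        simp only [Equiv.Perm.one_apply]
        rw [hxB t h0, hxA t h1]; ring)]
    simp only [Equiv.Perm.one_apply]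
    rw [hxB0, hxA t₀ ht01, hxB t₁ ht01.symm, hxA1, hv0, hv1]
    ring
  have hTτ : ∏ t : Fin ν, (x (siteB ν (τ t)) - x (siteA ν t)) = 2 * (s - u) := by
    rw [prod_T_pair (fun t => x (siteB ν (τ t)) - x (siteA ν t))
      t₀ t₁ ht01 (fun t h0 h1 => by
        simp only [hτ, Equiv.swap_apply_of_ne_of_ne h0 h1]
        rw [hxB t h0, hxA t h1]; ring)]
    simp only [hτ, Equiv.swap_apply_left, Equiv.swap_apply_right]
    rw [hxB t₁ ht01.symm, hxA t₀ ht01, hxB0, hxA1, hv0, hv1]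
    ring
  -- kill
  have hkill : ∀ σ ∈ nnCoverings ν, σ ∉ ({1, τ} : Finset (Equiv.Perm (Fin ν))) →
      ∏ t : Fin ν, (x (siteB ν (σ t)) - x (siteA ν t)) = 0 := by
    intro σ hσ hσL
    by_contra h0
    have hpair : ∀ (r : Fin ν) (h : r.val + 1 < ν), σ r = ⟨r.val + 1, h⟩ → r = t₀ := by
      intro r h hr
      by_contra hrne
      have hrv : r.val ≠ t0 := fun hh => hrne (Fin.ext hh)
      have hr2 : σ ⟨r.val + 1, h⟩ = r := nn_pair_up hσ rfl hr
      apply h0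
      apply Finset.prod_eq_zero (Finset.mem_univ (⟨r.val + 1, h⟩ : Fin ν))
      rw [hr2]
      rw [hxB r hrne, hxA ⟨r.val + 1, h⟩ (fun hh => by
        have := congrArg Fin.val hh; simp [ht₁] at this; omega)]
      push_cast; ring
    have huniq : ∀ (r r' : Fin ν) (h : r.val + 1 < ν) (h' : r'.val + 1 < ν),
        σ r = ⟨r.val + 1, h⟩ → σ r' = ⟨r'.val + 1, h'⟩ → r = r' := by
      intro r r' h h' hr hr'
      rw [hpair r h hr, hpair r' h' hr']
    rcases nn_one_or_swap hσ huniq with rfl | ⟨r, h, hr, hswap⟩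
    · exact hσL (by simp)
    · have hrt : r = t₀ := hpair r h hr
      have hv : r.val = t0 := by rw [hrt]
      have h2 : (⟨r.val + 1, h⟩ : Fin ν) = t₁ := Fin.ext (by simp [ht₁, hv])
      rw [h2, hrt] at hswap
      exact hσL (by simp [hswap, hτ])
  have hsub : ({1, τ} : Finset (Equiv.Perm (Fin ν))) ⊆ nnCoverings ν := by
    intro σ hσ
    simp only [Finset.mem_insert, Finset.mem_singleton] at hσ
    rcases hσ with rfl | rfl
    · exact one_mem_nn
    · have h2 : t₁ = (⟨t₀.val + 1, by simp [ht₀]; omega⟩ : Fin ν) := Fin.ext (by simp [ht₀, ht₁])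
      rw [hτ, h2]
      exact swap_mem_nn t₀ _
  have h1τ : (1 : Equiv.Perm (Fin ν)) ≠ τ := by
    intro h
    have h2 : ((1 : Equiv.Perm (Fin ν)) t₀).val = (τ t₀).val := by rw [h]
    rw [hτ, Equiv.swap_apply_left] at h2
    simp [ht₀, ht₁] at h2
  rw [eval_rvb, ← Finset.sum_subset hsub (fun σ h1 h2 => hkill σ h1 h2)]
  rw [Finset.sum_pair h1τ, hT1, hTτ]

lemma evalA {ν : ℕ} (hν : 2 ≤ ν) (t0 : ℕ) (ht : t0 < ν) (s u : ℂ) :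
    eval (Xf ν (2 * t0) s u) (rvbPoly ν (nnCoverings ν)) =
      (u - s)
      + (if t0 + 1 < ν then ((t0 : ℂ) + 2 - s) * (u - (t0 : ℂ) - 1) else 0)
      + (if 0 < t0 then ((t0 : ℂ) - s) * (u - (t0 : ℂ) + 1) else 0) := by
  set x := Xf ν (2 * t0) s u with hx
  set t₀ : Fin ν := ⟨t0, ht⟩ with ht₀
  -- value lemmas
  have hxA : ∀ t : Fin ν, t ≠ t₀ → x (siteA ν t) = (t.val : ℂ) := by
    intro t htne
    have hv : t.val ≠ t0 := fun h => htne (Fin.ext h)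
    show (if 2 * t.val = 2 * t0 then s else if 2 * t.val = 2 * t0 + 1 then u
      else (((2 * t.val + 1) / 2 : ℕ) : ℂ)) = _
    rw [if_neg (by omega), if_neg (by omega), show (2 * t.val + 1) / 2 = t.val by omega]
  have hxA0 : x (siteA ν t₀) = s := by
    show (if 2 * t0 = 2 * t0 then s else _) = _
    rw [if_pos rfl]
  have hxB : ∀ t : Fin ν, t ≠ t₀ → x (siteB ν t) = (t.val : ℂ) + 1 := by
    intro t htne
    have hv : t.val ≠ t0 := fun h => htne (Fin.ext h)
    show (if 2 * t.val + 1 = 2 * t0 then s else if 2 * t.val + 1 = 2 * t0 + 1 then u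
      else (((2 * t.val + 1 + 1) / 2 : ℕ) : ℂ)) = _
    rw [if_neg (by omega), if_neg (by omega), show (2 * t.val + 1 + 1) / 2 = t.val + 1 by omega]
    push_cast; ring
  have hxB0 : x (siteB ν t₀) = u := by
    show (if 2 * t0 + 1 = 2 * t0 then s else if 2 * t0 + 1 = 2 * t0 + 1 then u else _) = _
    rw [if_neg (by omega), if_pos rfl]
  have hv0 : (t₀.val : ℂ) = (t0 : ℂ) := by simp [ht₀]
  -- identity term
  have hT1 : ∏ t : Fin ν, (x (siteB ν ((1 : Equiv.Perm (Fin ν)) t)) - x (siteA ν t))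
      = u - s := by
    rw [prod_T_single (fun t => x (siteB ν ((1 : Equiv.Perm (Fin ν)) t)) - x (siteA ν t))
      t₀ (fun t h0 => by
        simp only [Equiv.Perm.one_apply]
        rw [hxB t h0, hxA t h0]; ring)]
    simp only [Equiv.Perm.one_apply]
    rw [hxB0, hxA0]
  -- pair position constraint
  have hpairA : ∀ σ, σ ∈ nnCoverings ν →
      (∏ t : Fin ν, (x (siteB ν (σ t)) - x (siteA ν t))) ≠ 0 →
      ∀ (r : Fin ν) (h : r.val + 1 < ν), σ r = ⟨r.val + 1, h⟩ →
        (r.val = t0 ∨ r.val + 1 = t0) := by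
    intro σ hσ h0 r h hr
    by_contra hrne
    push_neg at hrne
    obtain ⟨hr1, hr2⟩ := hrne
    have hs2 : σ ⟨r.val + 1, h⟩ = r := nn_pair_up hσ rfl hr
    apply h0
    apply Finset.prod_eq_zero (Finset.mem_univ (⟨r.val + 1, h⟩ : Fin ν))
    rw [hs2]
    rw [hxB r (fun hh => hr1 (congrArg Fin.val hh)),
        hxA ⟨r.val + 1, h⟩ (fun hh => hr2 (by have := congrArg Fin.val hh; simpa [ht₀] using this))]
    push_cast; ring
  -- uniqueness of pairs (given nonzero term)
  have hcross : ∀ σ, σ ∈ nnCoverings ν →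
      ∀ (a b : Fin ν) (ha : a.val + 1 < ν) (hb : b.val + 1 < ν),
        σ a = ⟨a.val + 1, ha⟩ → σ b = ⟨b.val + 1, hb⟩ → a.val = t0 → b.val + 1 = t0 → False := by
    intro σ hσ a b ha hb hsa hsb hat hbt
    have h1 : (⟨b.val + 1, hb⟩ : Fin ν) = a := Fin.ext (by simp [ht₀] at hat ⊢; omega)
    rw [h1] at hsb
    have h2 : σ a = b := by
      have := nn_pair_up hσ (a := b) (b := a) (by omega) hsb
      exact this
    rw [hsa] at h2
    have := congrArg Fin.val h2
    simp at this
    omega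
  rw [eval_rvb]
  by_cases hp : t0 + 1 < ν
  · -- τ⁺ exists
    set t₁ : Fin ν := ⟨t0 + 1, hp⟩ with ht₁
    have ht01 : t₀ ≠ t₁ := fun h => by have := congrArg Fin.val h; simp [ht₀, ht₁] at this
    set τp : Equiv.Perm (Fin ν) := Equiv.swap t₀ t₁ with hτp
    have hv1 : (t₁.val : ℂ) = (t0 : ℂ) + 1 := by rw [ht₁]; push_cast; ring
    have hTp : ∏ t : Fin ν, (x (siteB ν (τp t)) - x (siteA ν t))
        = ((t0 : ℂ) + 2 - s) * (u - (t0 : ℂ) - 1) := by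
      rw [prod_T_pair (fun t => x (siteB ν (τp t)) - x (siteA ν t))
        t₀ t₁ ht01 (fun t h0 h1 => by
          simp only [hτp, Equiv.swap_apply_of_ne_of_ne h0 h1]
          rw [hxB t h0, hxA t h0]; ring)]
      simp only [hτp, Equiv.swap_apply_left, Equiv.swap_apply_right]
      rw [hxB t₁ ht01.symm, hxA0, hxB0, hxA t₁ ht01.symm, hv1]
      ring
    have hτp_mem : τp ∈ nnCoverings ν := by
      have h2 : t₁ = (⟨t₀.val + 1, by simp [ht₀]; omega⟩ : Fin ν) := Fin.ext (by simp [ht₀, ht₁])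
      rw [hτp, h2]
      exact swap_mem_nn t₀ _
    have h1τp : (1 : Equiv.Perm (Fin ν)) ≠ τp := by
      intro h
      have h2 : ((1 : Equiv.Perm (Fin ν)) t₀).val = (τp t₀).val := by rw [h]
      rw [hτp, Equiv.swap_apply_left] at h2
      simp [ht₀, ht₁] at h2
    by_cases hm : 0 < t0
    · -- interior : both τ⁺ and τ⁻
      set tm : Fin ν := ⟨t0 - 1, by omega⟩ with htm
      have htm0 : tm ≠ t₀ := fun h => by have := congrArg Fin.val h; simp [ht₀, htm] at this; omega
      set τm : Equiv.Perm (Fin ν) := Equiv.swap tm t₀ with hτm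
      have hvm : (tm.val : ℂ) = (t0 : ℂ) - 1 := by
        rw [htm]; simp [Nat.cast_sub (by omega : 1 ≤ t0)]
      have hTm : ∏ t : Fin ν, (x (siteB ν (τm t)) - x (siteA ν t))
          = ((t0 : ℂ) - s) * (u - (t0 : ℂ) + 1) := by
        rw [prod_T_pair (fun t => x (siteB ν (τm t)) - x (siteA ν t))
          tm t₀ htm0 (fun t h0 h1 => by
            simp only [hτm, Equiv.swap_apply_of_ne_of_ne h0 h1]
            rw [hxB t h1, hxA t h1]; ring)]
        simp only [hτm, Equiv.swap_apply_left, Equiv.swap_apply_right]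
        rw [hxB0, hxA tm htm0, hxB tm htm0, hxA0, hvm]
        ring
      have hτm_mem : τm ∈ nnCoverings ν := by
        have h2 : t₀ = (⟨tm.val + 1, by simp [htm]; omega⟩ : Fin ν) :=
          Fin.ext (by simp [ht₀, htm]; omega)
        rw [hτm, h2]
        exact swap_mem_nn tm _
      have h1τm : (1 : Equiv.Perm (Fin ν)) ≠ τm := by
        intro h
        have h2 : ((1 : Equiv.Perm (Fin ν)) t₀).val = (τm t₀).val := by rw [h]
        rw [hτm, Equiv.swap_apply_right] at h2
        simp [ht₀, htm] at h2
        omega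
      have hpm : τp ≠ τm := by
        intro h
        have h2 : (τp t₀).val = (τm t₀).val := by rw [h]
        rw [hτp, Equiv.swap_apply_left, hτm, Equiv.swap_apply_right] at h2
        simp [ht₁, htm] at h2
        omega
      have hsub : ({1, τp, τm} : Finset (Equiv.Perm (Fin ν))) ⊆ nnCoverings ν := by
        intro σ hσ
        simp only [Finset.mem_insert, Finset.mem_singleton] at hσ
        rcases hσ with rfl | rfl | rfl
        · exact one_mem_nn
        · exact hτp_mem
        · exact hτm_mem
      have hkill : ∀ σ ∈ nnCoverings ν, σ ∉ ({1, τp, τm} : Finset (Equiv.Perm (Fin ν))) →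
          ∏ t : Fin ν, (x (siteB ν (σ t)) - x (siteA ν t)) = 0 := by
        intro σ hσ hσL
        by_contra h0
        have hpr := hpairA σ hσ h0
        have huniq : ∀ (r r' : Fin ν) (h : r.val + 1 < ν) (h' : r'.val + 1 < ν),
            σ r = ⟨r.val + 1, h⟩ → σ r' = ⟨r'.val + 1, h'⟩ → r = r' := by
          intro r r' h h' hr hr'
          rcases hpr r h hr with h1 | h1 <;> rcases hpr r' h' hr' with h2 | h2
          · exact Fin.ext (by omega)
          · exact absurd (hcross σ hσ r r' h h' hr hr' h1 h2) (fun f => f)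
          · exact absurd (hcross σ hσ r' r h' h hr' hr h2 h1) (fun f => f)
          · exact Fin.ext (by omega)
        rcases nn_one_or_swap hσ huniq with rfl | ⟨r, h, hr, hswap⟩
        · exact hσL (by simp)
        rcases hpr r h hr with h1 | h1
        · have hrt : r = t₀ := Fin.ext (by simpa [ht₀] using h1)
          have h2 : (⟨r.val + 1, h⟩ : Fin ν) = t₁ := Fin.ext (by simp [ht₁, h1])
          rw [h2, hrt] at hswap
          exact hσL (by simp [hswap, hτp])
        · have hrt : r = tm := Fin.ext (by simp [htm]; omega)
          have h2 : (⟨r.val + 1, h⟩ : Fin ν) = t₀ := Fin.ext (by simp [ht₀]; omega)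
          rw [h2, hrt] at hswap
          exact hσL (by simp [hswap, hτm])
      rw [← Finset.sum_subset hsub (fun σ h1 h2 => hkill σ h1 h2)]
      rw [Finset.sum_insert (by simp [h1τp, h1τm]), Finset.sum_pair hpm, hT1, hTp, hTm]
      rw [if_pos hp, if_pos hm]
      ring
    · -- t0 = 0 : only τ⁺
      have ht00 : t0 = 0 := by omega
      have hsub : ({1, τp} : Finset (Equiv.Perm (Fin ν))) ⊆ nnCoverings ν := by
        intro σ hσ
        simp only [Finset.mem_insert, Finset.mem_singleton] at hσ
        rcases hσ with rfl | rfl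
        · exact one_mem_nn
        · exact hτp_mem
      have hkill : ∀ σ ∈ nnCoverings ν, σ ∉ ({1, τp} : Finset (Equiv.Perm (Fin ν))) →
          ∏ t : Fin ν, (x (siteB ν (σ t)) - x (siteA ν t)) = 0 := by
        intro σ hσ hσL
        by_contra h0
        have hpr : ∀ (r : Fin ν) (h : r.val + 1 < ν), σ r = ⟨r.val + 1, h⟩ → r.val = t0 := by
          intro r h hr
          rcases hpairA σ hσ h0 r h hr with h1 | h1
          · exact h1
          · omega
        have huniq : ∀ (r r' : Fin ν) (h : r.val + 1 < ν) (h' : r'.val + 1 < ν),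
            σ r = ⟨r.val + 1, h⟩ → σ r' = ⟨r'.val + 1, h'⟩ → r = r' := by
          intro r r' h h' hr hr'
          exact Fin.ext (by rw [hpr r h hr, hpr r' h' hr'])
        rcases nn_one_or_swap hσ huniq with rfl | ⟨r, h, hr, hswap⟩
        · exact hσL (by simp)
        have h1 := hpr r h hr
        have hrt : r = t₀ := Fin.ext (by simpa [ht₀] using h1)
        have h2 : (⟨r.val + 1, h⟩ : Fin ν) = t₁ := Fin.ext (by simp [ht₁, h1])
        rw [h2, hrt] at hswap
        exact hσL (by simp [hswap, hτp])
      rw [← Finset.sum_subset hsub (fun σ h1 h2 => hkill σ h1 h2)]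
      rw [Finset.sum_pair h1τp, hT1, hTp]
      rw [if_pos hp, if_neg hm]
      ring
  · -- t0 + 1 = ν : only τ⁻
    have hm : 0 < t0 := by omega
    set tm : Fin ν := ⟨t0 - 1, by omega⟩ with htm
    have htm0 : tm ≠ t₀ := fun h => by have := congrArg Fin.val h; simp [ht₀, htm] at this; omega
    set τm : Equiv.Perm (Fin ν) := Equiv.swap tm t₀ with hτm
    have hvm : (tm.val : ℂ) = (t0 : ℂ) - 1 := by
      rw [htm]; simp [Nat.cast_sub (by omega : 1 ≤ t0)]
    have hTm : ∏ t : Fin ν, (x (siteB ν (τm t)) - x (siteA ν t))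
        = ((t0 : ℂ) - s) * (u - (t0 : ℂ) + 1) := by
      rw [prod_T_pair (fun t => x (siteB ν (τm t)) - x (siteA ν t))
        tm t₀ htm0 (fun t h0 h1 => by
          simp only [hτm, Equiv.swap_apply_of_ne_of_ne h0 h1]
          rw [hxB t h1, hxA t h1]; ring)]
      simp only [hτm, Equiv.swap_apply_left, Equiv.swap_apply_right]
      rw [hxB0, hxA tm htm0, hxB tm htm0, hxA0, hvm]
      ring
    have hτm_mem : τm ∈ nnCoverings ν := by
      have h2 : t₀ = (⟨tm.val + 1, by simp [htm]; omega⟩ : Fin ν) :=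
        Fin.ext (by simp [ht₀, htm]; omega)
      rw [hτm, h2]
      exact swap_mem_nn tm _
    have h1τm : (1 : Equiv.Perm (Fin ν)) ≠ τm := by
      intro h
      have h2 : ((1 : Equiv.Perm (Fin ν)) t₀).val = (τm t₀).val := by rw [h]
      rw [hτm, Equiv.swap_apply_right] at h2
      simp [ht₀, htm] at h2
      omega
    have hsub : ({1, τm} : Finset (Equiv.Perm (Fin ν))) ⊆ nnCoverings ν := by
      intro σ hσ
      simp only [Finset.mem_insert, Finset.mem_singleton] at hσ
      rcases hσ with rfl | rfl
      · exact one_mem_nn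
      · exact hτm_mem
    have hkill : ∀ σ ∈ nnCoverings ν, σ ∉ ({1, τm} : Finset (Equiv.Perm (Fin ν))) →
        ∏ t : Fin ν, (x (siteB ν (σ t)) - x (siteA ν t)) = 0 := by
      intro σ hσ hσL
      by_contra h0
      have hpr : ∀ (r : Fin ν) (h : r.val + 1 < ν), σ r = ⟨r.val + 1, h⟩ → r.val + 1 = t0 := by
        intro r h hr
        rcases hpairA σ hσ h0 r h hr with h1 | h1
        · omega
        · exact h1
      have huniq : ∀ (r r' : Fin ν) (h : r.val + 1 < ν) (h' : r'.val + 1 < ν),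
          σ r = ⟨r.val + 1, h⟩ → σ r' = ⟨r'.val + 1, h'⟩ → r = r' := by
        intro r r' h h' hr hr'
        have := hpr r h hr
        have := hpr r' h' hr'
        exact Fin.ext (by omega)
      rcases nn_one_or_swap hσ huniq with rfl | ⟨r, h, hr, hswap⟩
      · exact hσL (by simp)
      have h1 := hpr r h hr
      have hrt : r = tm := Fin.ext (by simp [htm]; omega)
      have h2 : (⟨r.val + 1, h⟩ : Fin ν) = t₀ := Fin.ext (by simp [ht₀]; omega)
      rw [h2, hrt] at hswap
      exact hσL (by simp [hswap, hτm])
    rw [← Finset.sum_subset hsub (fun σ h1 h2 => hkill σ h1 h2)]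
    rw [Finset.sum_pair h1τm, hT1, hTm]
    rw [if_neg hp, if_pos hm]
    ring

/-- eval depends only on values at vars -/
lemma eval_congr_vars {n : ℕ} (p : MvPolynomial (Fin n) ℂ) (x y : Fin n → ℂ)
    (h : ∀ i ∈ p.vars, x i = y i) : eval x p = eval y p := by
  rw [eval_eq, eval_eq]
  apply Finset.sum_congr rfl
  intro d hd
  congr 1
  apply Finset.prod_congr rfl
  intro i hi
  rw [h i ((MvPolynomial.mem_vars i).mpr ⟨d, hd, hi⟩)]

lemma splits_mix {n : ℕ} {F : MvPolynomial (Fin n) ℂ} {E : Finset (Fin n)}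
    (h : SplitsAcross F E)
    (x y : Fin n → ℂ) :
    eval x F * eval y F =
      eval (fun c => if c ∈ E then x c else y c) F *
      eval (fun c => if c ∈ E then y c else x c) F := by
  obtain ⟨p, q, rfl, hp, hq⟩ := h
  have hp1 : eval (fun c => if c ∈ E then x c else y c) p = eval x p :=
    eval_congr_vars _ _ _ (by intro i hi; simp [hp hi])
  have hp2 : eval (fun c => if c ∈ E then y c else x c) p = eval y p :=
    eval_congr_vars _ _ _ (by intro i hi; simp [hp hi])
  have hq1 : eval (fun c => if c ∈ E then x c else y c) q = eval y q :=
    eval_congr_vars _ _ _ (by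
      intro i hi
      have : i ∉ E := by simpa using hq hi
      simp [this])
  have hq2 : eval (fun c => if c ∈ E then y c else x c) q = eval x q :=
    eval_congr_vars _ _ _ (by
      intro i hi
      have : i ∉ E := by simpa using hq hi
      simp [this])
  simp only [map_mul, hp1, hp2, hq1, hq2]
  ring

lemma nat_boundary (P : ℕ → Prop) [DecidablePred P] :
    ∀ d i, P i → ¬ P (i + d) → ∃ k, i ≤ k ∧ k < i + d ∧ P k ∧ ¬ P (k + 1) := by
  intro d
  induction d with
  | zero => intro i hi hni; exact absurd hi hni
  | succ d ih =>
    intro i hi hni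
    by_cases h : P (i + d)
    · exact ⟨i + d, by omega, by omega, h, by rwa [show i + d + 1 = i + (d+1) by omega]⟩
    · obtain ⟨k, h1, h2, h3, h4⟩ := ih i hi h
      exact ⟨k, h1, by omega, h3, h4⟩

lemma exists_boundary {n : ℕ} (E : Finset (Fin n)) (hne : E.Nonempty) (hnu : E ≠ Finset.univ) :
    ∃ k : ℕ, ∃ h : k + 1 < n,
      ((⟨k, by omega⟩ : Fin n) ∈ E ↔ (⟨k + 1, h⟩ : Fin n) ∉ E) := by
  obtain ⟨a, ha⟩ := hne
  have : ∃ b : Fin n, b ∉ E := by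
    by_contra hb
    push_neg at hb
    exact hnu (Finset.eq_univ_iff_forall.mpr hb)
  obtain ⟨b, hb⟩ := this
  classical
  set P : ℕ → Prop := fun m => if h : m < n then (⟨m, h⟩ : Fin n) ∈ E else False with hP
  have hPa : P a.val := by simp [hP, a.isLt, ha]
  have hPb : ¬ P b.val := by simp [hP, b.isLt, hb]
  have hab : a.val ≠ b.val := by
    intro h
    exact hb (by rwa [show b = a from Fin.ext h.symm])
  rcases Nat.lt_or_ge a.val b.val with hlt | hge
  · obtain ⟨k, h1, h2, h3, h4⟩ := nat_boundary P (b.val - a.val) a.val hPa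
      (by rwa [show a.val + (b.val - a.val) = b.val by omega])
    have hk1 : k + 1 < n := by have := b.isLt; omega
    refine ⟨k, hk1, ?_⟩
    have h3' : (⟨k, by omega⟩ : Fin n) ∈ E := by simpa [hP, show k < n by omega] using h3
    have h4' : (⟨k + 1, hk1⟩ : Fin n) ∉ E := by simpa [hP, hk1] using h4
    exact ⟨fun _ => h4', fun _ => h3'⟩
  · -- b < a : ¬P at b, P at a; find k with ¬P k, P (k+1)? use nat_boundary on ¬P
    obtain ⟨k, h1, h2, h3, h4⟩ := nat_boundary (fun m => ¬ P m) (a.val - b.val) b.val hPb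
      (by rw [show b.val + (a.val - b.val) = a.val by omega]; exact not_not_intro hPa)
    have hk1 : k + 1 < n := by have := a.isLt; omega
    refine ⟨k, hk1, ?_⟩
    rw [not_not] at h4
    have h4' : (⟨k + 1, hk1⟩ : Fin n) ∈ E := by simpa [hP, hk1] using h4
    have h3' : (⟨k, by omega⟩ : Fin n) ∉ E := by simpa [hP, show k < n by omega] using h3
    exact ⟨fun h => absurd h h3', fun h => absurd h4' h⟩


/-- Theorem 3.1(iii),(iv): the nearest-neighbour RVB polynomial
splits across no nontrivial bipartition (genuine multipartite entanglement); in
particular no nonempty proper `E` has `ψ(E∩A) = E∩B` for all NN coverings `ψ`. -/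
theorem stmt_8 (ν : ℕ) (hν : 2 ≤ ν) :
    (∀ E : Finset (Fin (2 * ν)), E.Nonempty → E ≠ Finset.univ →
        ¬ SplitsAcross (rvbPoly ν (nnCoverings ν)) E) ∧
    (∀ E : Finset (Fin (2 * ν)), E.Nonempty → E ≠ Finset.univ →
        ¬ ∀ σ ∈ nnCoverings ν, MapsCut ν σ E) := by
  constructor
  · -- no splitting
    intro E hne hnu hsplit
    obtain ⟨k, hk1, hiff⟩ := exists_boundary E hne hnu
    have hfun1 : ∀ (a b a' b' : ℂ), (⟨k, by omega⟩ : Fin (2 * ν)) ∈ E →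
        (⟨k + 1, hk1⟩ : Fin (2 * ν)) ∉ E →
        (fun c => if c ∈ E then Xf ν k a b c else Xf ν k a' b' c) = Xf ν k a b' := by
      intro a b a' b' hkE hk1E
      funext c
      by_cases hc : c ∈ E
      · simp only [if_pos hc]
        show (if c.val = k then a else if c.val = k + 1 then b else (((c.val + 1) / 2 : ℕ) : ℂ))
          = (if c.val = k then a else if c.val = k + 1 then b' else (((c.val + 1) / 2 : ℕ) : ℂ))
        by_cases h1 : c.val = k
        · simp [h1]
        by_cases h2 : c.val = k + 1
        · exact absurd ((show c = ⟨k + 1, hk1⟩ from Fin.ext h2) ▸ hc) hk1E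
        · simp [h1, h2]
      · simp only [if_neg hc]
        show (if c.val = k then a' else if c.val = k + 1 then b' else (((c.val + 1) / 2 : ℕ) : ℂ))
          = (if c.val = k then a else if c.val = k + 1 then b' else (((c.val + 1) / 2 : ℕ) : ℂ))
        by_cases h1 : c.val = k
        · exact absurd ((show c = ⟨k, by omega⟩ from Fin.ext h1) ▸ hkE) hc
        · simp [h1]
    have hfun2 : ∀ (a b a' b' : ℂ), (⟨k, by omega⟩ : Fin (2 * ν)) ∉ E →
        (⟨k + 1, hk1⟩ : Fin (2 * ν)) ∈ E →
        (fun c => if c ∈ E then Xf ν k a b c else Xf ν k a' b' c) = Xf ν k a' b := by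
      intro a b a' b' hkE hk1E
      funext c
      by_cases hc : c ∈ E
      · simp only [if_pos hc]
        show (if c.val = k then a else if c.val = k + 1 then b else (((c.val + 1) / 2 : ℕ) : ℂ))
          = (if c.val = k then a' else if c.val = k + 1 then b else (((c.val + 1) / 2 : ℕ) : ℂ))
        by_cases h1 : c.val = k
        · exact absurd ((show c = ⟨k, by omega⟩ from Fin.ext h1) ▸ hc) hkE
        · simp [h1]
      · simp only [if_neg hc]
        show (if c.val = k then a' else if c.val = k + 1 then b' else (((c.val + 1) / 2 : ℕ) : ℂ))
          = (if c.val = k then a' else if c.val = k + 1 then b else (((c.val + 1) / 2 : ℕ) : ℂ))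
        by_cases h1 : c.val = k
        · simp [h1]
        by_cases h2 : c.val = k + 1
        · exact absurd ((show c = ⟨k + 1, hk1⟩ from Fin.ext h2) ▸ hk1E) (fun hh => hc hh)
        · simp [h1, h2]
    set F := rvbPoly ν (nnCoverings ν) with hF
    have hkey : eval (Xf ν k 0 0) F * eval (Xf ν k 1 1) F
        = eval (Xf ν k 0 1) F * eval (Xf ν k 1 0) F := by
      by_cases hkE : (⟨k, by omega⟩ : Fin (2 * ν)) ∈ E
      · have hk1E : (⟨k + 1, hk1⟩ : Fin (2 * ν)) ∉ E := hiff.mp hkE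
        have hsm := splits_mix hsplit (Xf ν k 0 0) (Xf ν k 1 1)
        rwa [hfun1 0 0 1 1 hkE hk1E, hfun1 1 1 0 0 hkE hk1E] at hsm
      · have hk1E : (⟨k + 1, hk1⟩ : Fin (2 * ν)) ∈ E := by
          by_contra hc
          exact hkE (hiff.mpr hc)
        have hsm := splits_mix hsplit (Xf ν k 0 0) (Xf ν k 1 1)
        rw [hfun2 0 0 1 1 hkE hk1E, hfun2 1 1 0 0 hkE hk1E] at hsm
        exact hsm.trans (mul_comm _ _)
    rcases Nat.even_or_odd k with ⟨t0, he⟩ | ⟨t0, he⟩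
    · -- k = 2 * t0
      have hk : k = 2 * t0 := by omega
      rw [hk] at hkey
      have ht0 : t0 < ν := by omega
      rw [hF, evalA hν t0 ht0 0 0, evalA hν t0 ht0 1 1, evalA hν t0 ht0 0 1,
        evalA hν t0 ht0 1 0] at hkey
      by_cases hp : t0 + 1 < ν <;> by_cases hm : 0 < t0
      · simp only [if_pos hp, if_pos hm] at hkey
        have h7 : (7 : ℂ) = 0 := by linear_combination hkey
        norm_num at h7
      · simp only [if_pos hp, if_neg hm] at hkey
        have h2 : (2 : ℂ) = 0 := by linear_combination hkey
        norm_num at h2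
      · simp only [if_neg hp, if_pos hm] at hkey
        have h2 : (2 : ℂ) = 0 := by linear_combination hkey
        norm_num at h2
      · omega
    · -- k = 2 * t0 + 1
      have hk : k = 2 * t0 + 1 := by omega
      rw [hk] at hkey
      have ht0 : t0 + 1 < ν := by omega
      rw [hF, evalB t0 ht0 0 0, evalB t0 ht0 1 1, evalB t0 ht0 0 1, evalB t0 ht0 1 0] at hkey
      have h8 : (8 : ℂ) = 0 := by linear_combination hkey
      norm_num at h8
  · -- not decomposable
    intro E hne hnu H
    have hsiteB_inj : ∀ t t' : Fin ν, siteB ν t = siteB ν t' → t = t' := by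
      intro t t' h
      have := congrArg Fin.val h
      exact Fin.ext (by simpa [siteB] using this)
    have hid := H 1 one_mem_nn
    unfold MapsCut at hid
    simp only [Equiv.Perm.one_apply] at hid
    have hBmem : ∀ t : Fin ν, siteB ν t ∈ E ↔ siteA ν t ∈ E := by
      intro t
      constructor
      · intro hB
        have hmem : siteB ν t ∈ E.filter (fun x => x.val % 2 = 1) := by
          rw [Finset.mem_filter]
          exact ⟨hB, by simp [siteB, Nat.add_mul_mod_self_left]⟩
        rw [← hid] at hmem
        obtain ⟨t', ht', heq⟩ := Finset.mem_image.mp hmem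
        rw [Finset.mem_filter] at ht'
        rw [← hsiteB_inj t' t heq]
        exact ht'.2
      · intro hA
        have hmem : siteB ν t ∈
            (Finset.univ.filter (fun t => siteA ν t ∈ E)).image (fun t => siteB ν t) :=
          Finset.mem_image_of_mem _ (Finset.mem_filter.mpr ⟨Finset.mem_univ t, hA⟩)
        rw [hid] at hmem
        exact (Finset.mem_filter.mp hmem).1
    have hswapE : ∀ (r : Fin ν) (h : r.val + 1 < ν),
        (siteA ν r ∈ E ↔ siteA ν ⟨r.val + 1, h⟩ ∈ E) := by
      intro r h
      have hsw := H (Equiv.swap r ⟨r.val + 1, h⟩) (swap_mem_nn r h)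
      unfold MapsCut at hsw
      constructor
      · intro hA
        have hmem : siteB ν (Equiv.swap r ⟨r.val + 1, h⟩ r) ∈
            (Finset.univ.filter (fun t => siteA ν t ∈ E)).image
              (fun t => siteB ν (Equiv.swap r ⟨r.val + 1, h⟩ t)) :=
          Finset.mem_image_of_mem _ (Finset.mem_filter.mpr ⟨Finset.mem_univ r, hA⟩)
        rw [hsw] at hmem
        have hB := (Finset.mem_filter.mp hmem).1
        rw [Equiv.swap_apply_left] at hB
        exact (hBmem _).mp hB
      · intro hA
        have hmem : siteB ν (Equiv.swap r ⟨r.val + 1, h⟩ ⟨r.val + 1, h⟩) ∈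
            (Finset.univ.filter (fun t => siteA ν t ∈ E)).image
              (fun t => siteB ν (Equiv.swap r ⟨r.val + 1, h⟩ t)) :=
          Finset.mem_image_of_mem _ (Finset.mem_filter.mpr ⟨Finset.mem_univ _, hA⟩)
        rw [hsw] at hmem
        have hB := (Finset.mem_filter.mp hmem).1
        rw [Equiv.swap_apply_right] at hB
        exact (hBmem _).mp hB
    have h0lt : 0 < ν := by omega
    have hconst : ∀ m (hm : m < ν), (siteA ν ⟨m, hm⟩ ∈ E ↔ siteA ν ⟨0, h0lt⟩ ∈ E) := by
      intro m
      induction m with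
      | zero => intro hm; rfl
      | succ m ih =>
        intro hm
        have hm' : m < ν := by omega
        have := hswapE ⟨m, hm'⟩ hm
        rw [← this]
        exact ih hm'
    by_cases h0 : siteA ν ⟨0, h0lt⟩ ∈ E
    · apply hnu
      apply Finset.eq_univ_iff_forall.mpr
      intro x
      rcases Nat.even_or_odd x.val with ⟨m, hxm⟩ | ⟨m, hxm⟩
      · have hm : m < ν := by have := x.isLt; omega
        have hx : x = siteA ν ⟨m, hm⟩ := Fin.ext (by simp [siteA]; omega)
        rw [hx]
        exact (hconst m hm).mpr h0
      · have hm : m < ν := by have := x.isLt; omega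
        have hx : x = siteB ν ⟨m, hm⟩ := Fin.ext (by simp [siteB]; omega)
        rw [hx]
        exact (hBmem _).mpr ((hconst m hm).mpr h0)
    · obtain ⟨a, ha⟩ := hne
      rcases Nat.even_or_odd a.val with ⟨m, hxm⟩ | ⟨m, hxm⟩
      · have hm : m < ν := by have := a.isLt; omega
        have hx : a = siteA ν ⟨m, hm⟩ := Fin.ext (by simp [siteA]; omega)
        rw [hx] at ha
        exact h0 ((hconst m hm).mp ha)
      · have hm : m < ν := by have := a.isLt; omega
        have hx : a = siteB ν ⟨m, hm⟩ := Fin.ext (by simp [siteB]; omega)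
        rw [hx] at ha
        exact h0 ((hconst m hm).mp ((hBmem _).mp ha))
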